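/- Let M be a connected topological space and g : M → ℝ a continuous function. Suppose g is locally constant on the open set U = {x : g(x) ≠ 0}. Then g is constant on M. -/

import Mathlib

theorem stmt_9 {M : Type*} [TopologicalSpace M] [ConnectedSpace M]
    (g : M → ℝ) (hg : Continuous g)
    (hloc : IsLocallyConstant (Set.restrict {x : M | g x ≠ 0} g)) :
    ∀ x y : M, g x = g y := by
  have hU : IsOpen {x : M | g x ≠ 0} := isOpen_ne.preimage hg
  -- key: each level set {y | g y = g x} with g x ≠ 0 is clopen
  by_cases hex : ∃ x : M, g x ≠ 0
  · obtain ⟨x, hx⟩ := hex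
    have hclopen : IsClopen {y : M | g y = g x} := by
      constructor
      · exact isClosed_eq hg continuous_const
      · rw [isOpen_iff_mem_nhds]
        intro y hy
        have hy' : g y ≠ 0 := by rw [Set.mem_setOf_eq] at hy; rw [hy]; exact hx
        obtain ⟨V, hVopen, hyV, hVconst⟩ := (IsLocallyConstant.iff_exists_open _).1 hloc
          ⟨y, hy'⟩
        obtain ⟨W, hWopen, hWeq⟩ := isOpen_induced_iff.1 hVopen
        have hmem : W ∩ {x : M | g x ≠ 0} ∈ nhds y :=
          (hWopen.inter hU).mem_nhds ⟨by
            have := hyV; rw [← hWeq] at this; exact this, hy'⟩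
        refine Filter.mem_of_superset hmem ?_
        rintro z ⟨hzW, hz⟩
        have : (⟨z, hz⟩ : {x : M | g x ≠ 0}) ∈ V := by
          rw [← hWeq]; exact hzW
        have := hVconst ⟨z, hz⟩ this
        change g z = g y at this
        rw [Set.mem_setOf_eq, this, hy]
    have := (isClopen_iff.1 hclopen).resolve_left (Set.nonempty_iff_ne_empty.1 ⟨x, rfl⟩)
    intro a b
    have ha : g a = g x := Set.eq_univ_iff_forall.1 this a
    have hb : g b = g x := Set.eq_univ_iff_forall.1 this b
    rw [ha, hb]
  · push_neg at hex
    intro a b; rw [hex a, hex b]
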